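/- arXiv:2303.15299 — 2 statements merged into one kernel-verified Lean document; each statement's English description precedes it below -/
import Mathlib

section
/- Let A be a real n×n matrix (n ≥ 1) and let β(A) denote the largest real part among the complex eigenvalues of A, i.e. β(A) = max{Re(λ) : λ ∈ σ(A)}, where σ(A) is the spectrum of A regarded as a complex matrix. Then for every κ > 0 there exists a constant ψ(κ) > 0 such that for all t ≥ 0, ‖exp(tA)‖ ≤ ψ(κ)·exp((β(A)+κ)·t), where ‖·‖ is the operator norm and exp denotes the matrix exponential. -/
open scoped Matrix.Norms.L2Operator
open Matrix


lemma euclid_coord_le (n : ℕ) (v : EuclideanSpace ℝ (Fin n)) (i : Fin n) :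
    ‖v i‖ ≤ ‖v‖ := by
  rw [EuclideanSpace.norm_eq]
  rw [show ‖v i‖ = Real.sqrt (‖v i‖^2) from (Real.sqrt_sq (norm_nonneg _)).symm]
  apply Real.sqrt_le_sqrt
  exact Finset.single_le_sum (f := fun j => ‖v j‖^2) (fun j _ => sq_nonneg _) (Finset.mem_univ i)

lemma euclid_norm_le_sum (n : ℕ) (v : EuclideanSpace ℝ (Fin n)) :
    ‖v‖ ≤ ∑ i, ‖v i‖ := by
  rw [EuclideanSpace.norm_eq]
  rw [show ∑ i, ‖v i‖ = Real.sqrt ((∑ i, ‖v i‖)^2) from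
    (Real.sqrt_sq (Finset.sum_nonneg fun i _ => norm_nonneg _)).symm]
  apply Real.sqrt_le_sqrt
  rw [sq, Finset.sum_mul]
  apply Finset.sum_le_sum
  intro i _
  rw [sq]
  apply mul_le_mul_of_nonneg_left _ (norm_nonneg _)
  exact Finset.single_le_sum (f := fun j => ‖v j‖) (fun j _ => norm_nonneg _) (Finset.mem_univ i)

lemma opnorm_le_sum_entries (n : ℕ) (X : Matrix (Fin n) (Fin n) ℝ) :
    ‖X‖ ≤ ∑ i, ∑ j, ‖X i j‖ := by
  rw [Matrix.l2_opNorm_def]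
  apply ContinuousLinearMap.opNorm_le_bound
  · positivity
  intro v
  have h1 : (Matrix.toEuclideanLin.trans LinearMap.toContinuousLinearMap X) v
      = (WithLp.equiv 2 (Fin n → ℝ)).symm (X *ᵥ (WithLp.equiv 2 (Fin n → ℝ)) v) := rfl
  rw [h1]
  calc ‖(WithLp.equiv 2 (Fin n → ℝ)).symm (X *ᵥ (WithLp.equiv 2 (Fin n → ℝ)) v)‖
      ≤ ∑ i, ‖((WithLp.equiv 2 (Fin n → ℝ)).symm (X *ᵥ (WithLp.equiv 2 (Fin n → ℝ)) v)) i‖ :=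
        euclid_norm_le_sum n _
    _ ≤ ∑ i, (∑ j, ‖X i j‖) * ‖v‖ := by
        apply Finset.sum_le_sum
        intro i _
        have : ((WithLp.equiv 2 (Fin n → ℝ)).symm (X *ᵥ (WithLp.equiv 2 (Fin n → ℝ)) v)) i
            = ∑ j, X i j * v j := rfl
        rw [this, Finset.sum_mul]
        refine (norm_sum_le _ _).trans (Finset.sum_le_sum fun j _ => ?_)
        rw [norm_mul]
        exact mul_le_mul_of_nonneg_left (euclid_coord_le n v j) (norm_nonneg _)
    _ = (∑ i, ∑ j, ‖X i j‖) * ‖v‖ := by rw [Finset.sum_mul]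

open scoped Matrix.Norms.L2Operator
open Matrix

-- mulVec as an ℝ-linear map in the matrix argument
noncomputable def mulVecL (n : ℕ) (w : Fin n → ℂ) :
    Matrix (Fin n) (Fin n) ℂ →L[ℝ] (Fin n → ℂ) :=
  LinearMap.toContinuousLinearMap
  { toFun := fun X => X *ᵥ w
    map_add' := fun X Y => Matrix.add_mulVec X Y w
    map_smul' := fun t X => Matrix.smul_mulVec t X w }

lemma mulVecL_apply (n : ℕ) (w : Fin n → ℂ) (X : Matrix (Fin n) (Fin n) ℂ) :
    mulVecL n w X = X *ᵥ w := rfl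

lemma pow_mulVec_eq_zero (n : ℕ) (Ac : Matrix (Fin n) (Fin n) ℂ) (lam : ℂ)
    (w : Fin n → ℂ) (d : ℕ)
    (hd : ((Matrix.toLinAlgEquiv' Ac - lam • 1) ^ d) w = 0) {k : ℕ} (hk : d ≤ k) :
    ((Ac - lam • 1) ^ k) *ᵥ w = 0 := by
  have he : Matrix.toLinAlgEquiv' ((Ac - lam • 1) ^ k)
      = (Matrix.toLinAlgEquiv' Ac - lam • 1) ^ k := by
    rw [map_pow, map_sub, _root_.map_smul, _root_.map_one]
  have : ((Ac - lam • 1) ^ k) *ᵥ w = (Matrix.toLinAlgEquiv' ((Ac - lam • 1) ^ k)) w := rfl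
  rw [this, he, ← Nat.sub_add_cancel hk, pow_add, Module.End.mul_apply, hd, map_zero]

lemma exp_split (n : ℕ) (Ac : Matrix (Fin n) (Fin n) ℂ) (lam : ℂ) (t : ℝ) :
    NormedSpace.exp (t • Ac)
      = Complex.exp (t • lam) • NormedSpace.exp (t • (Ac - lam • 1)) := by
  have hsplit : t • Ac = (t • lam) • (1 : Matrix (Fin n) (Fin n) ℂ) + t • (Ac - lam • 1) := by
    rw [smul_assoc]
    module
  rw [hsplit]
  have hcomm : Commute ((t • lam) • (1 : Matrix (Fin n) (Fin n) ℂ)) (t • (Ac - lam • 1)) :=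
    (Commute.one_left _).smul_left _ |>.smul_right _
  rw [Matrix.exp_add_of_commute _ _ hcomm]
  have h1 : NormedSpace.exp ((t • lam) • (1 : Matrix (Fin n) (Fin n) ℂ))
      = Complex.exp (t • lam) • (1 : Matrix (Fin n) (Fin n) ℂ) := by
    rw [← Algebra.algebraMap_eq_smul_one (t • lam),
      ← NormedSpace.algebraMap_exp_comm, ← Complex.exp_eq_exp_ℂ,
      Algebra.algebraMap_eq_smul_one]
  rw [h1, smul_mul_assoc, one_mul]

lemma exp_mulVec (n : ℕ) (Ac : Matrix (Fin n) (Fin n) ℂ) (lam : ℂ)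
    (w : Fin n → ℂ) (d : ℕ)
    (hd : ((Matrix.toLinAlgEquiv' Ac - lam • 1) ^ d) w = 0) (t : ℝ) :
    (NormedSpace.exp (t • (Ac - lam • 1))) *ᵥ w
      = ∑ k ∈ Finset.range d,
          (((Nat.factorial k : ℝ))⁻¹ * t ^ k) • ((Ac - lam • 1) ^ k *ᵥ w) := by
  set N := Ac - lam • 1 with hN
  have hterm : ∀ k : ℕ, (((Nat.factorial k : ℝ))⁻¹ • (t • N) ^ k) *ᵥ w
      = (((Nat.factorial k : ℝ))⁻¹ * t ^ k) • (N ^ k *ᵥ w) := by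
    intro k
    rw [smul_pow, Matrix.smul_mulVec, Matrix.smul_mulVec, smul_smul]
  have hsum : Summable fun k : ℕ => ((Nat.factorial k : ℝ))⁻¹ • (t • N) ^ k :=
    NormedSpace.expSeries_summable' (𝕂 := ℝ) (t • N)
  calc (NormedSpace.exp (t • N)) *ᵥ w
      = mulVecL n w (∑' k : ℕ, ((Nat.factorial k : ℝ))⁻¹ • (t • N) ^ k) := by
        rw [NormedSpace.exp_eq_tsum ℝ]
        rfl
    _ = ∑' k : ℕ, mulVecL n w (((Nat.factorial k : ℝ))⁻¹ • (t • N) ^ k) :=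
        (mulVecL n w).map_tsum hsum
    _ = ∑ k ∈ Finset.range d, mulVecL n w (((Nat.factorial k : ℝ))⁻¹ • (t • N) ^ k) := by
        apply tsum_eq_sum
        intro k hk
        have hdk : d ≤ k := by
          by_contra h
          exact hk (Finset.mem_range.mpr (lt_of_not_ge h))
        rw [mulVecL_apply, hterm k, pow_mulVec_eq_zero n Ac lam w d hd hdk, smul_zero]
    _ = ∑ k ∈ Finset.range d, (((Nat.factorial k : ℝ))⁻¹ * t ^ k) • (N ^ k *ᵥ w) := by
        refine Finset.sum_congr rfl fun k _ => ?_
        rw [mulVecL_apply, hterm k]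

lemma vec_bound (n : ℕ) (Ac : Matrix (Fin n) (Fin n) ℂ) (lam : ℂ) (w : Fin n → ℂ)
    (β κ : ℝ) (hκ : 0 < κ) (hre : lam.re ≤ β)
    (hw : w ∈ Module.End.maxGenEigenspace (Matrix.toLinAlgEquiv' Ac) lam) :
    ∃ C > (0:ℝ), ∀ t ≥ (0:ℝ),
      ‖(NormedSpace.exp (t • Ac)) *ᵥ w‖ ≤ C * Real.exp ((β + κ) * t) := by
  obtain ⟨d, hd⟩ := (Module.End.mem_maxGenEigenspace _ _ _).mp hw
  set N := Ac - lam • 1 with hN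
  have hS0 : 0 ≤ ∑ k ∈ Finset.range d, ‖N ^ k *ᵥ w‖ / κ ^ k :=
    Finset.sum_nonneg fun k _ => div_nonneg (norm_nonneg _) (pow_nonneg hκ.le _)
  set C : ℝ := (∑ k ∈ Finset.range d, ‖N ^ k *ᵥ w‖ / κ ^ k) + 1 with hC
  refine ⟨C, by rw [hC]; linarith, fun t ht => ?_⟩
  have key : (NormedSpace.exp (t • Ac)) *ᵥ w
      = Complex.exp (t • lam) • ∑ k ∈ Finset.range d,
          (((Nat.factorial k : ℝ))⁻¹ * t ^ k) • (N ^ k *ᵥ w) := by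
    rw [exp_split n Ac lam t, Matrix.smul_mulVec, exp_mulVec n Ac lam w d hd t]
  rw [key, norm_smul]
  have hne : ‖Complex.exp (t • lam)‖ = Real.exp (t * lam.re) := by
    rw [Complex.norm_exp]
    congr 1
    simp [Complex.real_smul, Complex.mul_re]
  have hsum_le : ‖∑ k ∈ Finset.range d, (((Nat.factorial k : ℝ))⁻¹ * t ^ k) • (N ^ k *ᵥ w)‖
      ≤ Real.exp (κ * t) * (∑ k ∈ Finset.range d, ‖N ^ k *ᵥ w‖ / κ ^ k) := by
    refine (norm_sum_le _ _).trans ?_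
    rw [Finset.mul_sum]
    refine Finset.sum_le_sum fun k _ => ?_
    rw [norm_smul, Real.norm_eq_abs]
    have hco : |((Nat.factorial k : ℝ))⁻¹ * t ^ k| ≤ Real.exp (κ * t) / κ ^ k := by
      rw [abs_of_nonneg (by positivity)]
      have h1 : (κ * t) ^ k / (Nat.factorial k : ℝ) ≤ Real.exp (κ * t) :=
        Real.pow_div_factorial_le_exp _ (mul_nonneg hκ.le ht) k
      rw [mul_pow] at h1
      have hκk : (0:ℝ) < κ ^ k := pow_pos hκ k
      have hfk : (0:ℝ) < (Nat.factorial k : ℝ) := by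
        exact_mod_cast Nat.cast_pos.mpr (Nat.factorial_pos k)
      rw [le_div_iff₀ hκk]
      calc ((Nat.factorial k : ℝ))⁻¹ * t ^ k * κ ^ k
          = κ ^ k * t ^ k / (Nat.factorial k : ℝ) := by field_simp
        _ ≤ Real.exp (κ * t) := h1
    calc |((Nat.factorial k : ℝ))⁻¹ * t ^ k| * ‖N ^ k *ᵥ w‖
        ≤ (Real.exp (κ * t) / κ ^ k) * ‖N ^ k *ᵥ w‖ :=
          mul_le_mul_of_nonneg_right hco (norm_nonneg _)
      _ = Real.exp (κ * t) * (‖N ^ k *ᵥ w‖ / κ ^ k) := by ring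
  calc ‖Complex.exp (t • lam)‖ * ‖∑ k ∈ Finset.range d,
        (((Nat.factorial k : ℝ))⁻¹ * t ^ k) • (N ^ k *ᵥ w)‖
      ≤ Real.exp (t * β) * (Real.exp (κ * t) *
          (∑ k ∈ Finset.range d, ‖N ^ k *ᵥ w‖ / κ ^ k)) := by
        rw [hne]
        refine mul_le_mul (Real.exp_le_exp.mpr ?_) hsum_le (norm_nonneg _) (Real.exp_nonneg _)
        exact mul_le_mul_of_nonneg_left hre ht
    _ ≤ Real.exp (t * β) * (Real.exp (κ * t) * C) := by
        refine mul_le_mul_of_nonneg_left ?_ (Real.exp_nonneg _)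
        refine mul_le_mul_of_nonneg_left ?_ (Real.exp_nonneg _)
        simp [hC]
    _ = C * Real.exp ((β + κ) * t) := by
        rw [show (β + κ) * t = t * β + κ * t by ring, Real.exp_add]
        ring

lemma sum_exp_bound {ι : Type*} {E : Type*} [NormedAddCommGroup E] (s : Finset ι) (r : ℝ)
    (g : ι → ℝ → E) (h : ∀ i ∈ s, ∃ C > (0:ℝ), ∀ t ≥ (0:ℝ), ‖g i t‖ ≤ C * Real.exp (r * t)) :
    ∃ C > (0:ℝ), ∀ t ≥ (0:ℝ), ‖∑ i ∈ s, g i t‖ ≤ C * Real.exp (r * t) := by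
  classical
  induction s using Finset.induction with
  | empty => exact ⟨1, one_pos, fun t ht => by simp [Real.exp_nonneg]⟩
  | @insert a s ha ih =>
    obtain ⟨C1, hC1, h1⟩ := h a (Finset.mem_insert_self a s)
    obtain ⟨C2, hC2, h2⟩ := ih fun i hi => h i (Finset.mem_insert_of_mem hi)
    refine ⟨C1 + C2, by linarith, fun t ht => ?_⟩
    rw [Finset.sum_insert ha]
    calc ‖g a t + ∑ i ∈ s, g i t‖ ≤ ‖g a t‖ + ‖∑ i ∈ s, g i t‖ := norm_add_le _ _
      _ ≤ C1 * Real.exp (r * t) + C2 * Real.exp (r * t) := add_le_add (h1 t ht) (h2 t ht)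
      _ = (C1 + C2) * Real.exp (r * t) := by ring

lemma col_bound (n : ℕ) (Ac : Matrix (Fin n) (Fin n) ℂ) (β κ : ℝ) (hκ : 0 < κ)
    (hspec : ∀ μ ∈ spectrum ℂ Ac, μ.re ≤ β) (j : Fin n) :
    ∃ C > (0:ℝ), ∀ t ≥ (0:ℝ),
      ‖(NormedSpace.exp (t • Ac)) *ᵥ Pi.single j 1‖ ≤ C * Real.exp ((β + κ) * t) := by
  set f : Module.End ℂ (Fin n → ℂ) := Matrix.toLinAlgEquiv' Ac with hf
  have htop : ⨆ μ : ℂ, f.maxGenEigenspace μ = ⊤ := Module.End.iSup_maxGenEigenspace_eq_top f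
  have hmem : (Pi.single j 1 : Fin n → ℂ) ∈ ⨆ μ : ℂ, f.maxGenEigenspace μ := by
    rw [htop]; trivial
  rw [Submodule.mem_iSup_iff_exists_finsupp] at hmem
  obtain ⟨c, hc, hcsum⟩ := hmem
  have hdecomp : ∀ t : ℝ, (NormedSpace.exp (t • Ac)) *ᵥ Pi.single j 1
      = ∑ μ ∈ c.support, (NormedSpace.exp (t • Ac)) *ᵥ c μ := by
    intro t
    rw [← hcsum, Finsupp.sum]
    exact map_sum ((NormedSpace.exp (t • Ac)).mulVecLin) _ _
  have hb := sum_exp_bound (E := Fin n → ℂ) c.support (β + κ)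
    (fun μ t => (NormedSpace.exp (t • Ac)) *ᵥ c μ) ?_
  · obtain ⟨C, hC, hCb⟩ := hb
    exact ⟨C, hC, fun t ht => by rw [hdecomp t]; exact hCb t ht⟩
  · intro μ hμ
    have hcμ : c μ ≠ 0 := Finsupp.mem_support_iff.mp hμ
    have heig : f.HasEigenvalue μ := by
      obtain ⟨k, hk⟩ := (Module.End.mem_maxGenEigenspace _ _ _).mp (hc μ)
      have : f.HasGenEigenvalue μ k := by
        rw [Module.End.HasGenEigenvalue, Module.End.HasUnifEigenvalue, Submodule.ne_bot_iff]
        refine ⟨c μ, ?_, hcμ⟩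
        rw [Module.End.mem_genEigenspace]
        exact ⟨k, le_refl _, hk⟩
      exact Module.End.hasEigenvalue_of_hasGenEigenvalue this
    have hμspec : μ ∈ spectrum ℂ Ac := by
      rw [← AlgEquiv.spectrum_eq (Matrix.toLinAlgEquiv' (R := ℂ) (n := Fin n)) Ac]
      exact Module.End.hasEigenvalue_iff_mem_spectrum.mp heig
    exact vec_bound n Ac μ (c μ) β κ hκ (hspec μ hμspec) (hc μ)


lemma cont_mapOfReal (n : ℕ) :
    Continuous (fun X : Matrix (Fin n) (Fin n) ℝ => X.map (Complex.ofReal ·)) :=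
  LinearMap.continuous_of_finiteDimensional
    (f := { toFun := fun X : Matrix (Fin n) (Fin n) ℝ => X.map (Complex.ofReal ·)
            map_add' := fun X Y => by ext i j; simp
            map_smul' := fun (t : ℝ) X => by ext i j; simp [Matrix.map_apply, Complex.real_smul] })

/-- Lemma 2: spectral growth bound for the matrix exponential.
`β` is the largest real part among the complex eigenvalues of `A`; the norm on matrices is
the L2 operator norm. -/
theorem matrix_exp_spectral_bound (n : ℕ) (hn : 1 ≤ n)
    (A : Matrix (Fin n) (Fin n) ℝ) (β : ℝ)
    (hβ : IsGreatest {x : ℝ | ∃ μ ∈ spectrum ℂ (A.map (Complex.ofReal ·)), x = μ.re} β) :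
    ∀ κ > (0 : ℝ), ∃ ψ > (0 : ℝ), ∀ t ≥ (0 : ℝ),
      ‖NormedSpace.exp (t • A)‖ ≤ ψ * Real.exp ((β + κ) * t) := by
  intro κ hκ
  set Ac : Matrix (Fin n) (Fin n) ℂ := A.map (Complex.ofReal ·) with hAc
  have hspec : ∀ μ ∈ spectrum ℂ Ac, μ.re ≤ β := fun μ hμ => hβ.2 ⟨μ, hμ, rfl⟩
  -- the complexification commutes with the exponential
  have hcont : Continuous (⇑(Complex.ofRealHom.mapMatrix :
      Matrix (Fin n) (Fin n) ℝ →+* Matrix (Fin n) (Fin n) ℂ)) :=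
    cont_mapOfReal n
  have hmap : ∀ t : ℝ, (NormedSpace.exp (t • A)).map (Complex.ofReal ·)
      = NormedSpace.exp (t • Ac) := by
    intro t
    have h1 := open scoped Matrix.Norms.Operator in NormedSpace.map_exp (Complex.ofRealHom.mapMatrix :
      Matrix (Fin n) (Fin n) ℝ →+* Matrix (Fin n) (Fin n) ℂ) hcont (t • A)
    have h2 : (Complex.ofRealHom.mapMatrix (t • A) : Matrix (Fin n) (Fin n) ℂ) = t • Ac := by
      ext i j
      simp [RingHom.mapMatrix_apply, Matrix.map_apply, hAc, Complex.real_smul]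
    have h3 : (Complex.ofRealHom.mapMatrix (NormedSpace.exp (t • A))
          : Matrix (Fin n) (Fin n) ℂ)
        = (NormedSpace.exp (t • A)).map (Complex.ofReal ·) := by
      ext i j
      simp [RingHom.mapMatrix_apply, Matrix.map_apply]
    rw [← h3, ← h2]
    exact h1
  -- per-column constants
  have hcols := fun j : Fin n => col_bound n Ac β κ hκ hspec j
  choose C hCpos hCb using hcols
  refine ⟨(n : ℝ) * ∑ j, C j, ?_, fun t ht => ?_⟩
  · have hsumpos : 0 < ∑ j : Fin n, C j := by
      apply Finset.sum_pos (fun j _ => hCpos j)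
      have : Nonempty (Fin n) := ⟨⟨0, hn⟩⟩
      exact Finset.univ_nonempty
    have hn' : (0:ℝ) < (n:ℝ) := by exact_mod_cast Nat.lt_of_lt_of_le Nat.zero_lt_one hn
    positivity
  · -- entrywise bound
    have hentry : ∀ i j : Fin n, ‖(NormedSpace.exp (t • A)) i j‖
        ≤ C j * Real.exp ((β + κ) * t) := by
      intro i j
      have h1 : ((NormedSpace.exp (t • A)) i j : ℂ) = (NormedSpace.exp (t • Ac)) i j := by
        rw [← hmap t]; rfl
      have h2 : ‖(NormedSpace.exp (t • A)) i j‖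
          = ‖(NormedSpace.exp (t • Ac)) i j‖ := by
        rw [← h1, Complex.norm_real]
      rw [h2]
      have h3 : (NormedSpace.exp (t • Ac)) i j
          = ((NormedSpace.exp (t • Ac)) *ᵥ Pi.single j 1) i := by
        simp [Matrix.mulVec_single]
      rw [h3]
      exact (norm_le_pi_norm _ i).trans (hCb j t ht)
    calc ‖NormedSpace.exp (t • A)‖
        ≤ ∑ i, ∑ j, ‖(NormedSpace.exp (t • A)) i j‖ :=
          opnorm_le_sum_entries n _
      _ ≤ ∑ _i : Fin n, ∑ j, C j * Real.exp ((β + κ) * t) := by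
          refine Finset.sum_le_sum fun i _ => Finset.sum_le_sum fun j _ => hentry i j
      _ = (n : ℝ) * ∑ j, C j * Real.exp ((β + κ) * t) := by
          rw [Finset.sum_const, Finset.card_univ, Fintype.card_fin, nsmul_eq_mul]
      _ = ((n : ℝ) * ∑ j, C j) * Real.exp ((β + κ) * t) := by
          rw [← Finset.sum_mul]; ring
end

section
/- Let A ∈ ℝ^{n×n}, B ∈ ℝ^{n×m}, C ∈ ℝ^{p×n}, S ∈ ℝ^{q×q}, and R ∈ ℝ^{p×q}. Suppose that for every complex eigenvalue λ of S, the complex block matrix [[A − λI_n, B], [C, 0]] (of size (n+p) × (n+m)) has rank n + p. Then there exist real matrices Π ∈ ℝ^{n×q} and Γ ∈ ℝ^{m×q} satisfying the regulator equations A·Π + B·Γ = Π·S and C·Π = R. -/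
open Matrix

/-- Nondegeneracy of the trace pairing. -/
lemma trace_pairing_eq_zero {a b : Type*} [Fintype a] [Fintype b] [DecidableEq a] [DecidableEq b]
    (D : Matrix a b ℂ) (h : ∀ X : Matrix a b ℂ, Matrix.trace (Dᵀ * X) = 0) : D = 0 := by
  ext i j
  have h1 := h (Matrix.single i j 1)
  simp only [Matrix.trace, Matrix.diag, Matrix.mul_apply, Matrix.transpose_apply,
    Matrix.single, Matrix.of_apply, mul_ite, mul_one, mul_zero, ite_and] at h1
  simpa [Finset.sum_ite_eq, Finset.sum_ite_eq'] using h1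

/-- Representation of a linear functional on matrices via the trace pairing. -/
lemma dual_repr {a b : Type*} [Fintype a] [Fintype b] [DecidableEq a] [DecidableEq b]
    (ψ : Matrix a b ℂ →ₗ[ℂ] ℂ) (X : Matrix a b ℂ) :
    ψ X = Matrix.trace ((Matrix.of fun i j => ψ (Matrix.single i j 1))ᵀ * X) := by
  have lhs : ψ X = ∑ i : a, ∑ j : b, X i j * ψ (Matrix.single i j 1) := by
    conv_lhs => rw [Matrix.matrix_eq_sum_single X]
    rw [map_sum]
    refine Finset.sum_congr rfl fun i _ => ?_
    rw [map_sum]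
    refine Finset.sum_congr rfl fun j _ => ?_
    have : Matrix.single i j (X i j) = X i j • Matrix.single i j 1 := by
      rw [Matrix.smul_single, smul_eq_mul, mul_one]
    rw [this, _root_.map_smul, smul_eq_mul]
  have rhs : Matrix.trace ((Matrix.of fun i j => ψ (Matrix.single i j 1))ᵀ * X)
      = ∑ i : a, ∑ j : b, X i j * ψ (Matrix.single i j 1) := by
    rw [Matrix.trace]
    simp only [Matrix.diag, Matrix.mul_apply, Matrix.transpose_apply, Matrix.of_apply]
    rw [Finset.sum_comm]
    exact Finset.sum_congr rfl fun i _ => Finset.sum_congr rfl fun j _ => mul_comm _ _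
  rw [lhs, rhs]


/-- Kernel triviality of the transposed block matrix from the rank condition. -/
lemma ker_of_rank (n m p : ℕ) (lam : ℂ)
    (A' : Matrix (Fin n) (Fin n) ℂ) (B' : Matrix (Fin n) (Fin m) ℂ)
    (C' : Matrix (Fin p) (Fin n) ℂ)
    (h : (Matrix.fromBlocks (A' - lam • (1 : Matrix (Fin n) (Fin n) ℂ)) B' C'
      (0 : Matrix (Fin p) (Fin m) ℂ)).rank = n + p)
    (x : Fin n → ℂ) (y : Fin p → ℂ)
    (h1 : A'ᵀ.mulVec x - lam • x + C'ᵀ.mulVec y = 0) (h2 : B'ᵀ.mulVec x = 0) :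
    x = 0 ∧ y = 0 := by
  classical
  set M := Matrix.fromBlocks (A' - lam • (1 : Matrix (Fin n) (Fin n) ℂ)) B' C'
    (0 : Matrix (Fin p) (Fin m) ℂ) with hM
  have hrT : Mᵀ.rank = n + p := by rw [Matrix.rank_transpose]; exact h
  have hker : LinearMap.ker Mᵀ.mulVecLin = ⊥ := by
    have hdim := LinearMap.finrank_range_add_finrank_ker Mᵀ.mulVecLin
    rw [Module.finrank_fintype_fun_eq_card, Fintype.card_sum, Fintype.card_fin,
      Fintype.card_fin] at hdim
    rw [Matrix.rank] at hrT
    rw [hrT] at hdim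
    have h0 : Module.finrank ℂ (LinearMap.ker Mᵀ.mulVecLin) = 0 := by omega
    exact Submodule.finrank_eq_zero.mp h0
  have hx : Mᵀ.mulVec (Sum.elim x y) = 0 := by
    rw [hM, Matrix.fromBlocks_transpose, Matrix.fromBlocks_mulVec]
    have e1 : (A' - lam • (1 : Matrix (Fin n) (Fin n) ℂ))ᵀ.mulVec x
        = A'ᵀ.mulVec x - lam • x := by
      rw [Matrix.transpose_sub, Matrix.transpose_smul, Matrix.transpose_one,
        Matrix.sub_mulVec, Matrix.smul_mulVec, Matrix.one_mulVec]
    simp only [Sum.elim_comp_inl, Sum.elim_comp_inr]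
    rw [e1]
    rw [Matrix.transpose_zero, Matrix.zero_mulVec, add_zero, h2, h1]
    funext i
    cases i <;> rfl
  have hz : Sum.elim x y = 0 := by
    have hmem : Sum.elim x y ∈ LinearMap.ker Mᵀ.mulVecLin := by
      rw [LinearMap.mem_ker, Matrix.mulVecLin_apply]
      exact hx
    rw [hker] at hmem
    exact (Submodule.mem_bot _).mp hmem
  constructor
  · funext i; exact congrFun hz (Sum.inl i)
  · funext i; exact congrFun hz (Sum.inr i)

/-- Solvability of the complex regulator equations from the dual kernel condition. -/
lemma solvC (n m p q : ℕ)
    (A' : Matrix (Fin n) (Fin n) ℂ) (B' : Matrix (Fin n) (Fin m) ℂ)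
    (C' : Matrix (Fin p) (Fin n) ℂ) (S' : Matrix (Fin q) (Fin q) ℂ)
    (R' : Matrix (Fin p) (Fin q) ℂ)
    (hker : ∀ lam ∈ spectrum ℂ S', ∀ (x : Fin n → ℂ) (y : Fin p → ℂ),
      A'ᵀ.mulVec x - lam • x + C'ᵀ.mulVec y = 0 → B'ᵀ.mulVec x = 0 → x = 0 ∧ y = 0) :
    ∃ (P : Matrix (Fin n) (Fin q) ℂ) (G : Matrix (Fin m) (Fin q) ℂ),
      A' * P + B' * G = P * S' ∧ C' * P = R' := by
  classical
  let L : (Matrix (Fin n) (Fin q) ℂ × Matrix (Fin m) (Fin q) ℂ) →ₗ[ℂ]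
      (Matrix (Fin n) (Fin q) ℂ × Matrix (Fin p) (Fin q) ℂ) :=
    { toFun := fun z => (A' * z.1 + B' * z.2 - z.1 * S', C' * z.1)
      map_add' := by
        intro u v
        simp only [Prod.fst_add, Prod.snd_add, Matrix.mul_add, Matrix.add_mul,
          Prod.mk_add_mk, Prod.mk.injEq]
        constructor
        · abel
        · trivial
      map_smul' := by
        intro c u
        simp only [Prod.smul_fst, Prod.smul_snd, Matrix.mul_smul, Matrix.smul_mul,
          RingHom.id_apply, Prod.smul_mk, smul_sub, smul_add, Prod.mk.injEq] }
  have hsurj : Function.Surjective L := by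
    rw [← LinearMap.dualMap_injective_iff]
    rw [injective_iff_map_eq_zero]
    intro φ hφ0
    -- φ vanishes on the range of L
    have hφL : ∀ z : Matrix (Fin n) (Fin q) ℂ × Matrix (Fin m) (Fin q) ℂ, φ (L z) = 0 := by
      intro z
      have : (L.dualMap φ) z = 0 := by rw [hφ0]; rfl
      simpa [LinearMap.dualMap_apply] using this
    set W : Matrix (Fin n) (Fin q) ℂ :=
      Matrix.of fun i j => φ (Matrix.single i j 1, 0) with hW
    set V : Matrix (Fin p) (Fin q) ℂ :=
      Matrix.of fun i j => φ (0, Matrix.single i j 1) with hV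
    -- decompose φ through the trace pairing
    have hrepr : ∀ X Y, φ (X, Y) = Matrix.trace (Wᵀ * X) + Matrix.trace (Vᵀ * Y) := by
      intro X Y
      have hsplit : φ (X, Y) = φ (X, 0) + φ (0, Y) := by
        rw [← map_add, Prod.mk_add_mk, add_zero, zero_add]
      have h1 : φ (X, 0) = Matrix.trace (Wᵀ * X) := by
        have := dual_repr (φ.comp (LinearMap.inl ℂ (Matrix (Fin n) (Fin q) ℂ)
          (Matrix (Fin p) (Fin q) ℂ))) X
        simpa using this
      have h2 : φ (0, Y) = Matrix.trace (Vᵀ * Y) := by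
        have := dual_repr (φ.comp (LinearMap.inr ℂ (Matrix (Fin n) (Fin q) ℂ)
          (Matrix (Fin p) (Fin q) ℂ))) Y
        simpa using this
      rw [hsplit, h1, h2]
    -- the adjoint relations
    have key : ∀ (P : Matrix (Fin n) (Fin q) ℂ) (G : Matrix (Fin m) (Fin q) ℂ),
        Matrix.trace ((A'ᵀ * W + C'ᵀ * V - W * S'ᵀ)ᵀ * P)
          + Matrix.trace ((B'ᵀ * W)ᵀ * G) = 0 := by
      intro P G
      have h0 := hφL (P, G)
      rw [show L (P, G) = (A' * P + B' * G - P * S', C' * P) from rfl, hrepr] at h0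
      rw [← h0]
      simp only [Matrix.transpose_add, Matrix.transpose_sub, Matrix.transpose_mul,
        Matrix.transpose_transpose, Matrix.add_mul, Matrix.sub_mul, Matrix.mul_add,
        Matrix.mul_sub, Matrix.trace_add, Matrix.trace_sub]
      simp only [Matrix.mul_assoc]
      have hc : (S' * (Wᵀ * P)).trace = (Wᵀ * (P * S')).trace := by
        rw [← Matrix.mul_assoc, ← Matrix.mul_assoc, ← Matrix.trace_mul_cycle]
      rw [hc]
      abel
    have hD1 : A'ᵀ * W + C'ᵀ * V - W * S'ᵀ = 0 := by
      apply trace_pairing_eq_zero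
      intro X
      have := key X 0
      simpa using this
    have hD2 : B'ᵀ * W = 0 := by
      apply trace_pairing_eq_zero
      intro X
      have := key 0 X
      simpa using this
    -- matrix equations for W, V
    have hWS : W * S'ᵀ = A'ᵀ * W + C'ᵀ * V := by
      have h := sub_eq_zero.mp hD1
      rw [← h]
    -- spectrum of the endomorphism v ↦ S'ᵀ *ᵥ v
    set f : Module.End ℂ (Fin q → ℂ) := Matrix.mulVecLin S'ᵀ with hf
    have hfeq : f = Matrix.toLinAlgEquiv' S'ᵀ := by
      apply LinearMap.ext; intro v
      simp [hf, Matrix.toLinAlgEquiv'_apply, Matrix.mulVecLin_apply, Matrix.mulVec_transpose]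
    have hspecT : spectrum ℂ S'ᵀ = spectrum ℂ S' := by
      ext μ
      simp only [spectrum.mem_iff]
      have halg : algebraMap ℂ (Matrix (Fin q) (Fin q) ℂ) μ - S'ᵀ
          = (algebraMap ℂ (Matrix (Fin q) (Fin q) ℂ) μ - S')ᵀ := by
        rw [Matrix.transpose_sub]
        congr 1
        rw [Matrix.algebraMap_eq_diagonal, Matrix.diagonal_transpose]
      rw [halg]
      constructor <;> intro h hc <;> apply h
      · rw [Matrix.isUnit_iff_isUnit_det, Matrix.det_transpose,
          ← Matrix.isUnit_iff_isUnit_det]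
        exact hc
      · rw [Matrix.isUnit_iff_isUnit_det, Matrix.det_transpose,
          ← Matrix.isUnit_iff_isUnit_det] at hc
        exact hc
    have hfspec : ∀ μ : ℂ, f.HasEigenvalue μ → μ ∈ spectrum ℂ S' := by
      intro μ hμ
      rw [Module.End.hasEigenvalue_iff_mem_spectrum, hfeq, AlgEquiv.spectrum_eq,
        hspecT] at hμ
      exact hμ
    -- induction on the generalized eigenvector order
    have indstep : ∀ μ ∈ spectrum ℂ S', ∀ (k : ℕ) (v : Fin q → ℂ),
        ((f - μ • 1) ^ k) v = 0 → W.mulVec v = 0 ∧ V.mulVec v = 0 := by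
      intro μ hμ k
      induction k with
      | zero =>
        intro v hv
        simp only [pow_zero, Module.End.one_apply] at hv
        simp [hv]
      | succ k ih =>
        intro v hv
        have hw : ((f - μ • 1) ^ k) ((f - μ • 1) v) = 0 := by
          rw [← Module.End.mul_apply, ← pow_succ]
          exact hv
        obtain ⟨hWw, hVw⟩ := ih ((f - μ • 1) v) hw
        have hfv : (f - μ • 1) v = S'ᵀ.mulVec v - μ • v := by
          simp [hf, LinearMap.sub_apply, LinearMap.smul_apply, Matrix.mulVecLin_apply, Matrix.mulVec_transpose]
        have key1 : A'ᵀ.mulVec (W.mulVec v) - μ • (W.mulVec v)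
            + C'ᵀ.mulVec (V.mulVec v) = 0 := by
          have e1 : W.mulVec ((f - μ • 1) v)
              = A'ᵀ.mulVec (W.mulVec v) + C'ᵀ.mulVec (V.mulVec v) - μ • (W.mulVec v) := by
            rw [hfv, Matrix.mulVec_sub, Matrix.mulVec_smul, Matrix.mulVec_mulVec, hWS,
              Matrix.add_mulVec, ← Matrix.mulVec_mulVec, ← Matrix.mulVec_mulVec]
          rw [e1] at hWw
          rw [← hWw]
          abel
        have key2 : B'ᵀ.mulVec (W.mulVec v) = 0 := by
          rw [Matrix.mulVec_mulVec, hD2, Matrix.zero_mulVec]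
        exact hker μ hμ (W.mulVec v) (V.mulVec v) key1 key2
    -- W and V annihilate every vector
    have hWV : ∀ v : Fin q → ℂ, W.mulVec v = 0 ∧ V.mulVec v = 0 := by
      have htop := Module.End.iSup_maxGenEigenspace_eq_top f
      have hle : ∀ μ : ℂ, f.maxGenEigenspace μ
          ≤ LinearMap.ker W.mulVecLin ⊓ LinearMap.ker V.mulVecLin := by
        intro μ u hu
        rw [Module.End.mem_maxGenEigenspace] at hu
        obtain ⟨k, hk⟩ := hu
        by_cases hu0 : u = 0
        · rw [hu0]; exact Submodule.zero_mem _
        · have hμ : μ ∈ spectrum ℂ S' := by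
            apply hfspec
            apply Module.End.hasEigenvalue_of_hasGenEigenvalue (k := k)
            have hmem : u ∈ f.genEigenspace μ (k : ℕ∞) :=
              Module.End.mem_genEigenspace_nat.mpr (LinearMap.mem_ker.mpr hk)
            exact fun hbot => hu0 (by simpa [hbot] using hmem)
          obtain ⟨h1, h2⟩ := indstep μ hμ k u hk
          exact Submodule.mem_inf.mpr ⟨by simpa [Matrix.mulVecLin_apply] using h1,
            by simpa [Matrix.mulVecLin_apply] using h2⟩
      have : (⊤ : Submodule ℂ (Fin q → ℂ))
          ≤ LinearMap.ker W.mulVecLin ⊓ LinearMap.ker V.mulVecLin := by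
        rw [← htop]; exact iSup_le hle
      intro v
      have hv := this (Submodule.mem_top (x := v))
      rw [Submodule.mem_inf] at hv
      exact ⟨by simpa [Matrix.mulVecLin_apply] using hv.1,
        by simpa [Matrix.mulVecLin_apply] using hv.2⟩
    -- hence W = 0 and V = 0
    have hW0 : W = 0 := by
      ext i j
      have := congrFun ((hWV (Pi.single j 1)).1) i
      simpa [Matrix.mulVec_single] using this
    have hV0 : V = 0 := by
      ext i j
      have := congrFun ((hWV (Pi.single j 1)).2) i
      simpa [Matrix.mulVec_single] using this
    -- conclude φ = 0
    apply LinearMap.ext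
    rintro ⟨X, Y⟩
    rw [hrepr X Y, hW0, hV0]
    simp
  obtain ⟨⟨P, G⟩, hPG⟩ := hsurj (0, R')
  have h1 : A' * P + B' * G - P * S' = 0 := congrArg Prod.fst hPG
  have h2 : C' * P = R' := congrArg Prod.snd hPG
  exact ⟨P, G, by rwa [sub_eq_zero] at h1, h2⟩



/-- Lemma 3: solvability of the regulator equations under the non-resonance rank condition.
For every eigenvalue `λ` of `S` (viewed as a complex matrix), the block matrix
`[[A - λI, B], [C, 0]]` has full row rank `n + p`; then the regulator equations
`A·Π + B·Γ = Π·S` and `C·Π = R` admit real solutions `Π`, `Γ`. -/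
theorem regulator_equations_solvable (n m p q : ℕ)
    (A : Matrix (Fin n) (Fin n) ℝ) (B : Matrix (Fin n) (Fin m) ℝ)
    (C : Matrix (Fin p) (Fin n) ℝ) (S : Matrix (Fin q) (Fin q) ℝ)
    (R : Matrix (Fin p) (Fin q) ℝ)
    (hrank : ∀ lam ∈ spectrum ℂ (S.map (Complex.ofReal ·)),
      (Matrix.fromBlocks
        (A.map (Complex.ofReal ·) - lam • (1 : Matrix (Fin n) (Fin n) ℂ))
        (B.map (Complex.ofReal ·))
        (C.map (Complex.ofReal ·))
        (0 : Matrix (Fin p) (Fin m) ℂ)).rank = n + p) :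
    ∃ (Pi : Matrix (Fin n) (Fin q) ℝ) (Γ : Matrix (Fin m) (Fin q) ℝ),
      A * Pi + B * Γ = Pi * S ∧ C * Pi = R := by
  classical
  obtain ⟨Pc, Gc, hc1, hc2⟩ := solvC n m p q (A.map (Complex.ofReal ·))
    (B.map (Complex.ofReal ·)) (C.map (Complex.ofReal ·)) (S.map (Complex.ofReal ·))
    (R.map (Complex.ofReal ·))
    (fun lam hlam x y h1 h2 => ker_of_rank n m p lam _ _ _ (hrank lam hlam) x y h1 h2)
  refine ⟨Pc.map Complex.re, Gc.map Complex.re, ?_, ?_⟩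
  · ext i j
    have h := congrArg (fun M => (M i j).re) hc1
    simp only [Matrix.add_apply, Matrix.mul_apply, Matrix.map_apply, Complex.add_re,
      Complex.re_sum, Complex.mul_re, Complex.ofReal_re, Complex.ofReal_im, zero_mul,
      mul_zero, sub_zero] at h ⊢
    exact h
  · ext i j
    have h := congrArg (fun M => (M i j).re) hc2
    simp only [Matrix.mul_apply, Matrix.map_apply, Complex.re_sum, Complex.mul_re,
      Complex.ofReal_re, Complex.ofReal_im, zero_mul, mul_zero, sub_zero] at h ⊢
    exact h
end
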